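/- For nonzero x, y ∈ ℂ^T with real representations x̲ ∈ ℝ^{2T} and Y ∈ ℝ^{2T×2}, the GLRT metric satisfies |xᴴy|²/(‖x‖²‖y‖²) = ‖P x̲‖²/‖x̲‖², where P = Y Y'/‖y‖² is the orthogonal projection onto the column space of Y. Hence maximizing |xᴴy|²/‖x‖² is equivalent to minimizing the principal angle between x̲ and the plane Yℝ². -/

import Mathlib

/-- For nonzero `x, y ∈ ℂ^T` with interleaved real representation
`x̲ ∈ ℝ^{2T}` and `Y ∈ ℝ^{2T×2}` (eq. (7)), the GLRT metric satisfies
`|xᴴy|²/(‖x‖²‖y‖²) = ‖P x̲‖²/‖x̲‖²` where `P = Y Y'/‖y‖²` is the orthogonal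
projection onto the column space of `Y`. -/
theorem stmt9 {T : ℕ} (x y : Fin T → ℂ) (hx : x ≠ 0) (hy : y ≠ 0)
    (Y : Fin T × Fin 2 → Fin 2 → ℝ)
    (hY : ∀ t : Fin T,
      Y (t, 0) 0 = (y t).re ∧ Y (t, 1) 0 = (y t).im ∧
      Y (t, 0) 1 = -(y t).im ∧ Y (t, 1) 1 = (y t).re)
    (xu : Fin T × Fin 2 → ℝ)
    (hxu : ∀ t : Fin T, xu (t, 0) = (x t).re ∧ xu (t, 1) = (x t).im)
    (Px : Fin T × Fin 2 → ℝ)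
    (hPx : ∀ r, Px r =
      (∑ r' : Fin T × Fin 2, (∑ j : Fin 2, Y r j * Y r' j) * xu r') /
        (∑ t, ‖y t‖ ^ 2)) :
    ‖∑ t, (starRingEnd ℂ) (x t) * y t‖ ^ 2 /
      ((∑ t, ‖x t‖ ^ 2) * (∑ t, ‖y t‖ ^ 2)) =
    (∑ r : Fin T × Fin 2, Px r ^ 2) / (∑ r : Fin T × Fin 2, xu r ^ 2) := by
  obtain ⟨t₀, ht₀⟩ := Function.ne_iff.mp hy
  obtain ⟨s₀, hs₀⟩ := Function.ne_iff.mp hx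
  set S : ℝ := ∑ t, ‖y t‖ ^ 2 with hSdef
  set N : ℝ := ∑ t, ‖x t‖ ^ 2 with hNdef
  have hS : 0 < S := Finset.sum_pos'
    (fun t _ => by positivity)
    ⟨t₀, Finset.mem_univ _, pow_pos (norm_pos_iff.mpr ht₀) 2⟩
  have hN : 0 < N := Finset.sum_pos'
    (fun t _ => by positivity)
    ⟨s₀, Finset.mem_univ _, pow_pos (norm_pos_iff.mpr hs₀) 2⟩
  set A : ℝ := ∑ t, ((x t).re * (y t).re + (x t).im * (y t).im) with hAdef
  set B : ℝ := ∑ t, ((x t).re * (y t).im - (x t).im * (y t).re) with hBdef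
  -- abs value computation
  have habs : ‖∑ t, (starRingEnd ℂ) (x t) * y t‖ ^ 2 = A ^ 2 + B ^ 2 := by
    rw [Complex.sq_norm, Complex.normSq_apply, Complex.re_sum, Complex.im_sum]
    have h1 : (∑ t, ((starRingEnd ℂ) (x t) * y t).re) = A := by
      apply Finset.sum_congr rfl; intro t _
      simp [Complex.mul_re]
    have h2 : (∑ t, ((starRingEnd ℂ) (x t) * y t).im) = B := by
      apply Finset.sum_congr rfl; intro t _
      simp [Complex.mul_im]; ring
    rw [h1, h2]; ring
  -- column sums of Y
  have hY00 : (∑ r : Fin T × Fin 2, Y r 0 * Y r 0) = S := by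
    rw [Fintype.sum_prod_type, hSdef]
    apply Finset.sum_congr rfl; intro t _
    obtain ⟨h1, h2, h3, h4⟩ := hY t
    rw [Fin.sum_univ_two, h1, h2, Complex.sq_norm, Complex.normSq_apply]
  have hY11 : (∑ r : Fin T × Fin 2, Y r 1 * Y r 1) = S := by
    rw [Fintype.sum_prod_type, hSdef]
    apply Finset.sum_congr rfl; intro t _
    obtain ⟨h1, h2, h3, h4⟩ := hY t
    rw [Fin.sum_univ_two, h3, h4, Complex.sq_norm, Complex.normSq_apply]; ring
  have hY01 : (∑ r : Fin T × Fin 2, Y r 0 * Y r 1) = 0 := by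
    rw [Fintype.sum_prod_type]
    apply Finset.sum_eq_zero; intro t _
    obtain ⟨h1, h2, h3, h4⟩ := hY t
    rw [Fin.sum_univ_two, h1, h2, h3, h4]; ring
  -- ∑ xu² = N
  have hxuN : (∑ r : Fin T × Fin 2, xu r ^ 2) = N := by
    rw [Fintype.sum_prod_type, hNdef]
    apply Finset.sum_congr rfl; intro t _
    obtain ⟨h1, h2⟩ := hxu t
    rw [Fin.sum_univ_two, h1, h2, Complex.sq_norm, Complex.normSq_apply]; ring
  -- Yᵀ x̲
  have key : ∀ r, (∑ r' : Fin T × Fin 2, (∑ j : Fin 2, Y r j * Y r' j) * xu r')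
      = Y r 0 * A - Y r 1 * B := by
    intro r
    rw [Fintype.sum_prod_type]
    have : ∀ t : Fin T, (∑ i : Fin 2, (∑ j : Fin 2, Y r j * Y (t, i) j) * xu (t, i))
        = Y r 0 * ((x t).re * (y t).re + (x t).im * (y t).im)
          - Y r 1 * ((x t).re * (y t).im - (x t).im * (y t).re) := by
      intro t
      obtain ⟨h1, h2, h3, h4⟩ := hY t
      obtain ⟨g1, g2⟩ := hxu t
      rw [Fin.sum_univ_two, Fin.sum_univ_two, Fin.sum_univ_two, h1, h2, h3, h4, g1, g2]
      ring
    rw [Finset.sum_congr rfl (fun t _ => this t), Finset.sum_sub_distrib,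
      ← Finset.mul_sum, ← Finset.mul_sum, hAdef, hBdef]
  -- ∑ Px² = (A²+B²)/S
  have hPxsum : (∑ r : Fin T × Fin 2, Px r ^ 2) = (A ^ 2 + B ^ 2) / S := by
    have h1 : ∀ r : Fin T × Fin 2, Px r ^ 2
        = (A ^ 2 * (Y r 0 * Y r 0) + B ^ 2 * (Y r 1 * Y r 1)
            - (2 * A * B) * (Y r 0 * Y r 1)) / S ^ 2 := by
      intro r
      rw [hPx r, key r, div_pow]
      congr 1; ring
    rw [Finset.sum_congr rfl (fun r _ => h1 r), ← Finset.sum_div,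
      Finset.sum_sub_distrib, Finset.sum_add_distrib,
      ← Finset.mul_sum, ← Finset.mul_sum, ← Finset.mul_sum, hY00, hY11, hY01]
    field_simp
    ring
  rw [habs, hPxsum, hxuN, div_div, mul_comm S N]
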